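/- Let F be a finite field of characteristic 3 and let x ∈ SL_3(F) be an element of order 3 such that (x - 1)² ≠ 0 (as a 3×3 matrix; i.e., x is a regular unipotent element, with Jordan form a single block J_3). Then the centralizer of x in SL_3(F) has odd order. -/

import Mathlib

/-- Let `F` be a finite field of characteristic 3 and let `x ∈ SL₃(F)` have order 3
with `(x - 1)² ≠ 0` (a regular unipotent element, Jordan form `J₃`). Then the
centralizer of `x` in `SL₃(F)` has odd order. -/
theorem SL3_char_three_regular_unipotent_centralizer_odd
    {F : Type*} [Field F] [Fintype F] [CharP F 3]
    (x : Matrix.SpecialLinearGroup (Fin 3) F) (hx : orderOf x = 3)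
    (hreg : ((x : Matrix (Fin 3) (Fin 3) F) - 1) ^ 2 ≠ 0) :
    Odd (Nat.card (Subgroup.centralizer {x})) := by
  haveI : Fact (Nat.Prime 3) := ⟨by norm_num⟩
  have h2 : (2 : F) ≠ 0 := by
    intro h
    have := (CharP.cast_eq_zero_iff F 3 2).mp h
    omega
  rw [← Nat.not_even_iff_odd]
  intro heven
  obtain ⟨g, hg⟩ := exists_prime_orderOf_dvd_card' 2 heven.two_dvd
  -- basic facts
  have hg1 : g ≠ 1 := by
    intro h; rw [h, orderOf_one] at hg; omega
  have hgsq : g ^ 2 = 1 := by rw [← hg]; exact pow_orderOf_eq_one g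
  set A : Matrix (Fin 3) (Fin 3) F := (x : Matrix (Fin 3) (Fin 3) F) with hA
  set M : Matrix (Fin 3) (Fin 3) F := ((g : Matrix.SpecialLinearGroup (Fin 3) F) : Matrix (Fin 3) (Fin 3) F) with hM
  have hcomm : A * M = M * A := by
    have := g.2
    rw [Subgroup.mem_centralizer_iff] at this
    have h := this x (Set.mem_singleton x)
    have := congrArg (fun y : Matrix.SpecialLinearGroup (Fin 3) F => (y : Matrix (Fin 3) (Fin 3) F)) h
    simpa using this
  have hM2 : M ^ 2 = 1 := by
    have h1 : ((g : Matrix.SpecialLinearGroup (Fin 3) F)) ^ 2 = 1 := by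
      exact_mod_cast congrArg (Subtype.val) hgsq
    have := congrArg (fun y : Matrix.SpecialLinearGroup (Fin 3) F => (y : Matrix (Fin 3) (Fin 3) F)) h1
    simpa using this
  have hdet : M.det = 1 := (g : Matrix.SpecialLinearGroup (Fin 3) F).2
  set N : Matrix (Fin 3) (Fin 3) F := A - 1 with hN
  have hA3 : A ^ 3 = 1 := by
    have := pow_orderOf_eq_one x
    rw [hx] at this
    have := congrArg (fun y : Matrix.SpecialLinearGroup (Fin 3) F => (y : Matrix (Fin 3) (Fin 3) F)) this
    simpa using this
  have hN3 : N ^ 3 = 0 := by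
    rw [hN, sub_pow_char_of_commute 3 (Commute.one_right A), hA3, one_pow, sub_self]
  have hMN : M * N = N * M := by
    rw [hN, mul_sub, sub_mul, hcomm, mul_one, one_mul]
  -- vector with N^2 v ≠ 0
  have hvex : ∃ v : Fin 3 → F, (N ^ 2).mulVec v ≠ 0 := by
    by_contra h
    push_neg at h
    apply hreg
    have : Matrix.toLin' (N ^ 2) = Matrix.toLin' (0 : Matrix (Fin 3) (Fin 3) F) := by
      apply LinearMap.ext
      intro u
      rw [Matrix.toLin'_apply, h u]; simp
    exact Matrix.toLin'.injective this
  obtain ⟨v, hv⟩ := hvex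
  set e1 : Fin 3 → F := v with he1
  set e2 : Fin 3 → F := N.mulVec v with he2
  set e3 : Fin 3 → F := (N ^ 2).mulVec v with he3
  have hNe1 : N.mulVec e1 = e2 := rfl
  have hNe2 : N.mulVec e2 = e3 := by
    rw [he2, he3, Matrix.mulVec_mulVec, ← sq]
  have hNe3 : N.mulVec e3 = 0 := by
    rw [he3, Matrix.mulVec_mulVec, ← pow_succ', hN3, Matrix.zero_mulVec]
  have he3ne : e3 ≠ 0 := hv
  set w : Fin 3 → (Fin 3 → F) := ![e1, e2, e3] with hw
  have key : ∀ c0 c1 c2 : F, c0 • e1 + c1 • e2 + c2 • e3 = 0 → c0 = 0 ∧ c1 = 0 ∧ c2 = 0 := by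
    intro c0 c1 c2 hc
    have h0 : c0 = 0 := by
      have := congrArg (fun u => N.mulVec (N.mulVec u)) hc
      simp only [Matrix.mulVec_add, Matrix.mulVec_smul, hNe1, hNe2, hNe3,
        Matrix.mulVec_zero, smul_zero, add_zero] at this
      exact (smul_eq_zero.mp this).resolve_right he3ne
    have h1 : c1 = 0 := by
      rw [h0, zero_smul, zero_add] at hc
      have := congrArg (fun u => N.mulVec u) hc
      simp only [Matrix.mulVec_add, Matrix.mulVec_smul, hNe2, hNe3,
        Matrix.mulVec_zero, smul_zero, add_zero] at this
      exact (smul_eq_zero.mp this).resolve_right he3ne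
    have h2' : c2 = 0 := by
      rw [h0, h1, zero_smul, zero_smul, zero_add, zero_add] at hc
      exact (smul_eq_zero.mp hc).resolve_right he3ne
    exact ⟨h0, h1, h2'⟩
  have hli : LinearIndependent F w := by
    rw [Fintype.linearIndependent_iff]
    intro c hc
    rw [Fin.sum_univ_three] at hc
    have := key (c 0) (c 1) (c 2) (by simpa [hw] using hc)
    intro i
    fin_cases i
    · exact this.1
    · exact this.2.1
    · exact this.2.2
  have hcard : Fintype.card (Fin 3) = Module.finrank F (Fin 3 → F) := by
    simp
  set B := basisOfLinearIndependentOfCardEqFinrank hli hcard with hB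
  have hBw : ⇑B = w := coe_basisOfLinearIndependentOfCardEqFinrank hli hcard
  set a := B.repr (M.mulVec v) 0 with ha
  set b := B.repr (M.mulVec v) 1 with hb
  set c := B.repr (M.mulVec v) 2 with hc
  have hMe1 : M.mulVec e1 = a • e1 + b • e2 + c • e3 := by
    have := B.sum_repr (M.mulVec v)
    rw [Fin.sum_univ_three] at this
    rw [← this]
    simp [hBw, hw, ha, hb, hc, he1]
  have hcommvec : ∀ u : Fin 3 → F, M.mulVec (N.mulVec u) = N.mulVec (M.mulVec u) := by
    intro u
    rw [Matrix.mulVec_mulVec, Matrix.mulVec_mulVec, hMN]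
  have hMe2 : M.mulVec e2 = a • e2 + b • e3 := by
    rw [he2, hcommvec, ← he1, hMe1]
    simp only [Matrix.mulVec_add, Matrix.mulVec_smul, hNe1, hNe2, hNe3, smul_zero, add_zero]
  have hMe3 : M.mulVec e3 = a • e3 := by
    rw [← hNe2, hcommvec, hMe2]
    simp only [Matrix.mulVec_add, Matrix.mulVec_smul, hNe2, hNe3, smul_zero, add_zero]
  -- use M^2 = 1
  have hsq : (a ^ 2 - 1) • e1 + (2 * a * b) • e2 + (b ^ 2 + 2 * a * c) • e3 = 0 := by
    have h1 : M.mulVec (M.mulVec e1) = e1 := by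
      rw [Matrix.mulVec_mulVec, ← sq, hM2, Matrix.one_mulVec]
    rw [hMe1] at h1
    simp only [Matrix.mulVec_add, Matrix.mulVec_smul, hMe1, hMe2, hMe3] at h1
    linear_combination (norm := module) h1
  obtain ⟨ha2, hab, hbc⟩ := key _ _ _ hsq
  have ha1 : a = 1 ∨ a = -1 := by
    have : (a - 1) * (a + 1) = 0 := by ring_nf; linear_combination ha2
    rcases mul_eq_zero.mp this with h | h
    · left; linear_combination h
    · right; linear_combination h
  have hane : a ≠ 0 := by
    rcases ha1 with h | h <;> rw [h]
    · exact one_ne_zero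
    · exact neg_ne_zero.mpr one_ne_zero
  have hb0 : b = 0 := by
    rcases mul_eq_zero.mp hab with h | h
    · rcases mul_eq_zero.mp h with h' | h'
      · exact absurd h' h2
      · exact absurd h' hane
    · exact h
  have hc0 : c = 0 := by
    rw [hb0] at hbc
    have h2ac : 2 * a * c = 0 := by linear_combination hbc
    rcases mul_eq_zero.mp h2ac with h | h
    · rcases mul_eq_zero.mp h with h' | h'
      · exact absurd h' h2
      · exact absurd h' hane
    · exact h
  rw [hb0] at hMe1 hMe2
  rw [hc0] at hMe1
  simp only [zero_smul, add_zero] at hMe1 hMe2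
  rcases ha1 with haa | haa
  · -- a = 1, so M = 1, contradicting order 2
    rw [haa, one_smul] at hMe1 hMe2 hMe3
    have hM1 : M = 1 := by
      have heq : Matrix.toLin' M = Matrix.toLin' (1 : Matrix (Fin 3) (Fin 3) F) := by
        apply B.ext
        intro i
        have hbi : B i = w i := congrFun hBw i
        rw [Matrix.toLin'_apply, Matrix.toLin'_apply, Matrix.one_mulVec, hbi]
        fin_cases i
        · exact hMe1
        · exact hMe2
        · exact hMe3
      exact Matrix.toLin'.injective heq
    apply hg1
    apply Subtype.ext
    apply Subtype.ext
    rw [← hM, hM1]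
    rfl
  · -- a = -1, so M = -1, contradicting det = 1
    rw [haa, neg_one_smul] at hMe1 hMe2 hMe3
    have hM1 : M = -1 := by
      have heq : Matrix.toLin' M = Matrix.toLin' (-1 : Matrix (Fin 3) (Fin 3) F) := by
        apply B.ext
        intro i
        have hbi : B i = w i := congrFun hBw i
        rw [Matrix.toLin'_apply, Matrix.toLin'_apply, Matrix.neg_mulVec, Matrix.one_mulVec, hbi]
        fin_cases i
        · exact hMe1
        · exact hMe2
        · exact hMe3
      exact Matrix.toLin'.injective heq
    rw [hM1, Matrix.det_neg, Matrix.det_one] at hdet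
    simp only [Fintype.card_fin] at hdet
    norm_num at hdet
    exact h2 (by linear_combination -hdet)
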